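/- arXiv:1412.6818 — 3 statements merged into one kernel-verified Lean document; each statement's English description precedes it below -/
import Mathlib

section
/- Let λ ∈ X and let w ∈ W be such that wλ is dominant. Then ℓ(t_λ · w⁻¹) = ℓ(t_λ) + ℓ(w⁻¹) in W_aff (note that t_λ w⁻¹ = w⁻¹ t_{wλ}). -/
open scoped BigOperators

/-- The data of a finite reduced crystallographic root system `Φ`, with a chosen system of
positive roots `pos` cut out by a homomorphism `f : X → ℝ` not vanishing on any root, inside a
finitely generated free abelian group `X` (the weight lattice).  For each root `α` we record its
coroot `coroot α : X →+ ℤ` and the associated reflection `s α : x ↦ x - ⟨x, α∨⟩ • α`, an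
automorphism of `X`.  The reflections preserve `Φ` and the coroots are equivariant for them. -/
structure RootSystemData (X : Type*) [AddCommGroup X] [Module.Free ℤ X] [Module.Finite ℤ X] where
  /-- the (finite) set of roots -/
  Φ : Finset X
  /-- the set of positive roots -/
  pos : Finset X
  /-- the coroot attached to each root, as a homomorphism `X → ℤ` -/
  coroot : X → (X →+ ℤ)
  /-- the reflection attached to each root -/
  s : X → AddAut X
  /-- a homomorphism `X → ℝ` cutting out the positive roots -/
  f : X →+ ℝ
  f_ne : ∀ α ∈ Φ, f α ≠ 0
  pos_def : ∀ α, α ∈ pos ↔ α ∈ Φ ∧ 0 < f α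
  pairing_self : ∀ α ∈ Φ, coroot α α = 2
  s_apply : ∀ α ∈ Φ, ∀ x : X, s α x = x - coroot α x • α
  s_stable : ∀ α ∈ Φ, ∀ β ∈ Φ, s α β ∈ Φ
  reduced : ∀ α ∈ Φ, ∀ n : ℤ, n • α ∈ Φ → n = 1 ∨ n = -1
  coroot_equivariant : ∀ α ∈ Φ, ∀ β ∈ Φ, ∀ x : X, coroot (s α β) x = coroot β ((s α).symm x)

namespace RootSystemData

variable {X : Type*} [AddCommGroup X] [Module.Free ℤ X] [Module.Finite ℤ X] [DecidableEq X]
  (R : RootSystemData X)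

/-- The Weyl group `W`, the subgroup of `Aut(X)` generated by the reflections `s_α`, `α ∈ Φ`. -/
def W : AddSubgroup (AddAut X) := AddSubgroup.closure (R.s '' ↑R.Φ)

/-- A weight `λ` is dominant if `⟨λ, α∨⟩ ≥ 0` for all positive roots `α`. -/
def IsDominant (lam : X) : Prop := ∀ α ∈ R.pos, 0 ≤ R.coroot α lam

/-- `ℓ(u) = #{α ∈ Φ⁺ : uα ∈ −Φ⁺}` for `u` in the (finite) Weyl group. -/
def lenW (u : AddAut X) : ℕ := (R.pos.filter (fun α => -(u α) ∈ R.pos)).card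

/-- The Iwahori–Matsumoto length of the element `u t_λ` of the extended affine Weyl group
`W_aff = W ⋉ X`:
`ℓ(u t_λ) = Σ_{α ∈ Φ⁺ ∩ u⁻¹(Φ⁺)} |⟨λ, α∨⟩| + Σ_{α ∈ Φ⁺ ∩ u⁻¹(−Φ⁺)} |1 + ⟨λ, α∨⟩|`. -/
def lenAff (u : AddAut X) (lam : X) : ℕ :=
  ∑ α ∈ R.pos.filter (fun α => u α ∈ R.pos), (R.coroot α lam).natAbs
    + ∑ α ∈ R.pos.filter (fun α => -(u α) ∈ R.pos), (1 + R.coroot α lam).natAbs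

/-- The length of the translation `t_λ`: `ℓ(t_λ) = Σ_{α ∈ Φ⁺} |⟨λ, α∨⟩|`. -/
def lenT (lam : X) : ℕ := ∑ α ∈ R.pos, (R.coroot α lam).natAbs

end RootSystemData


section Aux

namespace RootSystemData

variable {X : Type*} [AddCommGroup X] [Module.Free ℤ X] [Module.Finite ℤ X] [DecidableEq X]
  (R : RootSystemData X)

lemma coroot_s_self {α : X} (hα : α ∈ R.Φ) (x : X) :
    R.coroot α (R.s α x) = - R.coroot α x := by
  rw [R.s_apply α hα]
  simp only [map_sub, map_zsmul, R.pairing_self α hα, smul_eq_mul]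
  ring

lemma s_s {α : X} (hα : α ∈ R.Φ) (x : X) : R.s α (R.s α x) = x := by
  rw [R.s_apply α hα (R.s α x), R.coroot_s_self hα, R.s_apply α hα x, neg_zsmul]
  abel

lemma s_inv_apply {α : X} (hα : α ∈ R.Φ) (x : X) : (R.s α).symm x = R.s α x := by
  have : (R.s α).symm (R.s α (R.s α x)) = (R.s α).symm x := by rw [R.s_s hα]
  simpa using this.symm

lemma s_self {α : X} (hα : α ∈ R.Φ) : R.s α α = -α := by
  rw [R.s_apply α hα, R.pairing_self α hα, two_zsmul]; abel

lemma neg_mem {α : X} (hα : α ∈ R.Φ) : -α ∈ R.Φ := by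
  have := R.s_stable α hα α hα
  rwa [R.s_self hα] at this

lemma coroot_neg {β : X} (hβ : β ∈ R.Φ) (x : X) : R.coroot (-β) x = - R.coroot β x := by
  have h := R.coroot_equivariant β hβ β hβ x
  rw [R.s_self hβ, R.s_inv_apply hβ, R.coroot_s_self hβ] at h
  exact h

/-- dichotomy: for a root `α`, exactly one of `α`, `-α` is positive. -/
lemma pos_iff_not_neg_pos {α : X} (hα : α ∈ R.Φ) : α ∈ R.pos ↔ ¬ (-α ∈ R.pos) := by
  have hfa := R.f_ne α hα
  rw [R.pos_def, R.pos_def]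
  simp only [map_neg]
  constructor
  · rintro ⟨_, h⟩ ⟨_, h'⟩; linarith
  · intro h
    refine ⟨hα, ?_⟩
    rcases lt_trichotomy (R.f α) 0 with h1 | h1 | h1
    · exact absurd ⟨R.neg_mem hα, by linarith⟩ h
    · exact absurd h1 hfa
    · exact h1

lemma neg_pos_of_not_pos {α : X} (hα : α ∈ R.Φ) (h : ¬ α ∈ R.pos) : -α ∈ R.pos := by
  by_contra hc
  exact h ((R.pos_iff_not_neg_pos hα).mpr hc)

/-- elements of `W` stabilize `Φ` and the coroots are `W`-equivariant. -/
lemma w_props {w : AddAut X} (hw : w ∈ R.W) :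
    ∀ β ∈ R.Φ, w β ∈ R.Φ ∧ ∀ x, R.coroot (w β) x = R.coroot β (w.symm x) := by
  set P : AddAut X → Prop :=
    fun u => ∀ β ∈ R.Φ, u β ∈ R.Φ ∧ ∀ x, R.coroot (u β) x = R.coroot β (u.symm x) with hP
  suffices h : P w ∧ P (-w) from h.1
  refine AddSubgroup.closure_induction (p := fun u _ => P u ∧ P (-u)) ?_ ?_ ?_ ?_ hw
  · rintro u ⟨α, hα, rfl⟩
    have hgen : P (R.s α) := fun β hβ =>
      ⟨R.s_stable α hα β hβ, fun x => R.coroot_equivariant α hα β hβ x⟩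
    refine ⟨hgen, fun β hβ => ?_⟩
    have h1 : (-(R.s α)) β = R.s α β := R.s_inv_apply hα β
    refine ⟨h1 ▸ R.s_stable α hα β hβ, fun x => ?_⟩
    rw [h1, R.coroot_equivariant α hα β hβ, AddAut.neg_symm, R.s_inv_apply hα]
  · exact ⟨fun β hβ => ⟨by simpa using hβ, fun x => rfl⟩,
      fun β hβ => ⟨by simpa using hβ, fun x => rfl⟩⟩
  · rintro u v _ _ ⟨hu, hu'⟩ ⟨hv, hv'⟩
    constructor
    · intro β hβ
      have h1 := hv β hβ
      have h2 := hu (v β) h1.1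
      refine ⟨by simpa using h2.1, fun x => ?_⟩
      have h3 := h2.2 x
      simp only [AddAut.add_apply] at h3 ⊢
      rw [h3, h1.2]
      rfl
    · intro β hβ
      have h1 := hu' β hβ
      have h2 := hv' ((-u) β) h1.1
      rw [neg_add_rev]
      refine ⟨by simpa using h2.1, fun x => ?_⟩
      have h3 := h2.2 x
      simp only [AddAut.add_apply] at h3 ⊢
      rw [h3, h1.2, AddAut.neg_symm, AddAut.neg_symm]
      rfl
  · rintro u _ ⟨h1, h2⟩; exact ⟨h2, by simpa using h1⟩

end RootSystemData

end Aux

/-- Let `λ ∈ X` and let `w ∈ W` be such that `wλ` is dominant.  Then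
`ℓ(t_λ · w⁻¹) = ℓ(t_λ) + ℓ(w⁻¹)` in `W_aff`.  Note that `t_λ w⁻¹ = w⁻¹ t_{wλ}`, so the
left-hand side is the Iwahori–Matsumoto length of the element `w⁻¹ t_{wλ}`. -/
theorem length_t_lambda_winv
    {X : Type*} [AddCommGroup X] [Module.Free ℤ X] [Module.Finite ℤ X] [DecidableEq X]
    (R : RootSystemData X) (lam : X) (w : AddAut X) (hw : w ∈ R.W)
    (hdom : R.IsDominant (w lam)) :
    R.lenAff w.symm (w lam) = R.lenT lam + R.lenW w.symm := by
  have hwinv : w.symm ∈ R.W := neg_mem hw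
  have hwp := R.w_props hw
  have hwp' := R.w_props hwinv
  have hposΦ : ∀ α ∈ R.pos, α ∈ R.Φ := fun α hα => ((R.pos_def α).mp hα).1
  -- the second filter is the complement of the first
  have hfilter : R.pos.filter (fun α => -(w.symm α) ∈ R.pos)
      = R.pos.filter (fun α => ¬ (w.symm α ∈ R.pos)) := by
    apply Finset.filter_congr
    intro α hα
    have hΦ : w.symm α ∈ R.Φ := (hwp' α (hposΦ α hα)).1
    simp [R.pos_iff_not_neg_pos hΦ]
  -- second sum splits off lenW
  have hB : ∑ α ∈ R.pos.filter (fun α => -(w.symm α) ∈ R.pos),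
      (1 + R.coroot α (w lam)).natAbs
      = (R.pos.filter (fun α => -(w.symm α) ∈ R.pos)).card
        + ∑ α ∈ R.pos.filter (fun α => -(w.symm α) ∈ R.pos), (R.coroot α (w lam)).natAbs := by
    have key : ∀ α ∈ R.pos.filter (fun α => -(w.symm α) ∈ R.pos),
        (1 + R.coroot α (w lam)).natAbs = 1 + (R.coroot α (w lam)).natAbs := fun α hα =>
      Int.natAbs_add_of_nonneg (by norm_num) (hdom α (Finset.mem_of_mem_filter α hα))
    rw [Finset.sum_congr rfl key, Finset.sum_add_distrib, Finset.sum_const, smul_eq_mul, mul_one]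
  -- combine two sums over complementary filters
  have hsplit : ∑ α ∈ R.pos.filter (fun α => w.symm α ∈ R.pos), (R.coroot α (w lam)).natAbs
      + ∑ α ∈ R.pos.filter (fun α => -(w.symm α) ∈ R.pos), (R.coroot α (w lam)).natAbs
      = ∑ α ∈ R.pos, (R.coroot α (w lam)).natAbs := by
    rw [hfilter]
    exact Finset.sum_filter_add_sum_filter_not _ _ _
  -- reindexing: the total sum equals lenT lam
  have hmain : ∑ α ∈ R.pos, (R.coroot α (w lam)).natAbs
      = ∑ β ∈ R.pos, (R.coroot β lam).natAbs := by
    have hcor : ∀ α ∈ R.pos, R.coroot α (w lam) = R.coroot (w.symm α) lam := by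
      intro α hα
      have := (hwp' α (hposΦ α hα)).2 lam
      rw [AddEquiv.symm_symm] at this
      rw [this]
    have hws : ∀ x : X, w (w.symm x) = x := fun x => w.apply_symm_apply x
    have hsw : ∀ x : X, w.symm (w x) = x := fun x => w.symm_apply_apply x
    rw [Finset.sum_congr rfl (fun α hα => by rw [hcor α hα])]
    refine Finset.sum_nbij'
      (fun α => if w.symm α ∈ R.pos then w.symm α else -(w.symm α))
      (fun β => if w β ∈ R.pos then w β else -(w β)) ?_ ?_ ?_ ?_ ?_
    · intro α hα
      have hΦ : w.symm α ∈ R.Φ := (hwp' α (hposΦ α hα)).1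
      by_cases h : w.symm α ∈ R.pos
      · rw [if_pos h]; exact h
      · rw [if_neg h]; exact R.neg_pos_of_not_pos hΦ h
    · intro β hβ
      have hΦ : w β ∈ R.Φ := (hwp β (hposΦ β hβ)).1
      by_cases h : w β ∈ R.pos
      · rw [if_pos h]; exact h
      · rw [if_neg h]; exact R.neg_pos_of_not_pos hΦ h
    · intro α hα
      by_cases h : w.symm α ∈ R.pos
      · rw [if_pos h, if_pos (by rwa [hws α]), hws α]
      · have h2 : ¬ (-α ∈ R.pos) := (R.pos_iff_not_neg_pos (hposΦ α hα)).mp hα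
        rw [if_neg h, map_neg, hws α, if_neg h2, neg_neg]
    · intro β hβ
      by_cases h : w β ∈ R.pos
      · rw [if_pos h, if_pos (by rwa [hsw β]), hsw β]
      · have h2 : ¬ (-β ∈ R.pos) := (R.pos_iff_not_neg_pos (hposΦ β hβ)).mp hβ
        rw [if_neg h, map_neg, hsw β, if_neg h2, neg_neg]
    · intro α hα
      have hΦ : w.symm α ∈ R.Φ := (hwp' α (hposΦ α hα)).1
      by_cases h : w.symm α ∈ R.pos
      · rw [if_pos h]
      · rw [if_neg h, R.coroot_neg hΦ, Int.natAbs_neg]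
  unfold RootSystemData.lenAff RootSystemData.lenT RootSystemData.lenW
  rw [hB, ← hmain, ← hsplit]
  omega
end

section
/- Let i ∈ I, and let Δ and X be objects of D satisfying: (a) Hom_D(Δ, ∇^j⟨m⟩[n]) = 0 for all j ∈ I, m, n ∈ ℤ unless (j, n, m) = (i, 0, 0), and Hom_D(Δ, ∇^i) is one-dimensional over 𝕜; (b) the same conditions hold with Δ replaced by X; and (c) there exists a nonzero morphism φ : Δ → ∇^i whose cone lies in D_{<i}. Then X is isomorphic to Δ. -/
open CategoryTheory CategoryTheory.Limits CategoryTheory.Pretriangulated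

/-- The smallest class of objects of a (pre)triangulated category `D` containing a given set `S`
of objects and forming a strictly full triangulated subcategory: it contains `S` and the zero
objects, and is closed under isomorphism, under the shifts `⟦n⟧` (`n ∈ ℤ`), and under extensions
(given a distinguished triangle, if the two outer objects belong to the class then so does the
middle one). -/
inductive triangulatedClosure {D : Type*} [Category D] [Preadditive D] [HasZeroObject D]
    [HasShift D ℤ] [∀ n : ℤ, (shiftFunctor D n).Additive] [Pretriangulated D]
    (S : Set D) : D → Prop
  | mem {X : D} : X ∈ S → triangulatedClosure S X
  | zero {X : D} : IsZero X → triangulatedClosure S X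
  | iso {X Y : D} : triangulatedClosure S X → (X ≅ Y) → triangulatedClosure S Y
  | shift {X : D} (n : ℤ) : triangulatedClosure S X → triangulatedClosure S (X⟦n⟧)
  | ext {T : Triangle D} : T ∈ distinguishedTriangles →
      triangulatedClosure S T.obj₁ → triangulatedClosure S T.obj₃ → triangulatedClosure S T.obj₂

set_option linter.unusedSectionVars false


section Aux

variable {D : Type*} [Category D] [Preadditive D] [HasZeroObject D]
    [HasShift D ℤ] [∀ n : ℤ, (shiftFunctor D n).Additive] [Pretriangulated D]

/-- Transfer bijectivity of `ψ ≫ ·` along an isomorphism of targets. -/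
lemma auxCompBijOfIso {X Δ A B : D} (ψ : X ⟶ Δ) (e : A ≅ B)
    (h : Function.Bijective (fun g : Δ ⟶ A => ψ ≫ g)) :
    Function.Bijective (fun g : Δ ⟶ B => ψ ≫ g) := by
  constructor
  · intro g₁ g₂ hg
    have : ψ ≫ (g₁ ≫ e.inv) = ψ ≫ (g₂ ≫ e.inv) := by
      simp only [← Category.assoc]
      exact congrArg (· ≫ e.inv) hg
    have h2 := h.1 this
    calc g₁ = (g₁ ≫ e.inv) ≫ e.hom := by simp
    _ = (g₂ ≫ e.inv) ≫ e.hom := by rw [h2]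
    _ = g₂ := by simp
  · intro f
    obtain ⟨g, hg⟩ := h.2 (f ≫ e.inv)
    have hg' : ψ ≫ g = f ≫ e.inv := hg
    refine ⟨g ≫ e.hom, ?_⟩
    show ψ ≫ (g ≫ e.hom) = f
    rw [← Category.assoc, hg', Category.assoc]; simp

lemma auxBijShift {X Δ Z : D} (ψ : X ⟶ Δ)
    (h : ∀ n : ℤ, Function.Bijective (fun g : Δ ⟶ Z⟦n⟧ => ψ ≫ g)) (k : ℤ) :
    ∀ n : ℤ, Function.Bijective (fun g : Δ ⟶ (Z⟦k⟧)⟦n⟧ => ψ ≫ g) := fun n =>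
  auxCompBijOfIso ψ ((shiftFunctorAdd D k n).app Z) (h (k + n))

/-- The four-lemma style chase through a distinguished triangle. -/
lemma auxChase {X Δ : D} (ψ : X ⟶ Δ) (T : Triangle D) (hT : T ∈ distinguishedTriangles)
    (h1 : Function.Bijective (fun g : Δ ⟶ T.obj₁ => ψ ≫ g))
    (h1s : Function.Bijective (fun g : Δ ⟶ T.obj₁⟦(1 : ℤ)⟧ => ψ ≫ g))
    (h3 : Function.Bijective (fun g : Δ ⟶ T.obj₃ => ψ ≫ g))
    (h3s : Function.Bijective (fun g : Δ ⟶ T.obj₃⟦(-1 : ℤ)⟧ => ψ ≫ g)) :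
    Function.Bijective (fun g : Δ ⟶ T.obj₂ => ψ ≫ g) := by
  have hT' : T.invRotate ∈ distinguishedTriangles := inv_rot_of_distTriang T hT
  constructor
  · -- injectivity
    intro g₁ g₂ hg
    suffices h : ∀ g : Δ ⟶ T.obj₂, ψ ≫ g = 0 → g = 0 by
      have := h (g₁ - g₂) (by simp only [Preadditive.comp_sub, hg, sub_self])
      exact sub_eq_zero.mp this
    intro g hg0
    have hg2 : g ≫ T.mor₂ = 0 := by
      apply h3.1
      show ψ ≫ g ≫ T.mor₂ = ψ ≫ (0 : Δ ⟶ T.obj₃)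
      rw [← Category.assoc, hg0, zero_comp, comp_zero]
    obtain ⟨u, hu⟩ := Triangle.coyoneda_exact₂ T hT g hg2
    -- ψ ≫ u kills T.mor₁ = T.invRotate.mor₂
    have hu2 : (ψ ≫ u) ≫ T.invRotate.mor₂ = 0 := by
      show (ψ ≫ u) ≫ T.mor₁ = 0
      rw [Category.assoc, ← hu, hg0]
    obtain ⟨w, hw⟩ := Triangle.coyoneda_exact₂ T.invRotate hT' (ψ ≫ u) hu2
    obtain ⟨w', hw'⟩ := h3s.2 w
    have hw'' : ψ ≫ w' = w := hw'
    have hu3 : u = w' ≫ T.invRotate.mor₁ := by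
      apply h1.1
      show ψ ≫ u = ψ ≫ (w' ≫ T.invRotate.mor₁)
      erw [hw, ← hw'', Category.assoc]
      rfl
    erw [hu, hu3, Category.assoc]
    have hz : T.invRotate.mor₁ ≫ T.invRotate.mor₂ = 0 :=
      comp_distTriang_mor_zero₁₂ _ hT'
    rw [show T.mor₁ = T.invRotate.mor₂ from rfl]
    exact (congrArg (fun x => w' ≫ x) hz).trans comp_zero
  · -- surjectivity
    intro f
    obtain ⟨u, hu⟩ := h3.2 (f ≫ T.mor₂)
    have hu' : ψ ≫ u = f ≫ T.mor₂ := hu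
    have hu3 : u ≫ T.mor₃ = 0 := by
      apply h1s.1
      show ψ ≫ u ≫ T.mor₃ = ψ ≫ (0 : Δ ⟶ T.obj₁⟦(1 : ℤ)⟧)
      rw [← Category.assoc, hu', Category.assoc, comp_distTriang_mor_zero₂₃ _ hT,
        comp_zero, comp_zero]
    obtain ⟨v, hv⟩ := Triangle.coyoneda_exact₃ T hT u hu3
    have hfv : (f - ψ ≫ v) ≫ T.mor₂ = 0 := by
      rw [Preadditive.sub_comp, Category.assoc, ← hv, hu', sub_self]
    obtain ⟨w, hw⟩ := Triangle.coyoneda_exact₂ T hT (f - ψ ≫ v) hfv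
    obtain ⟨t, ht⟩ := h1.2 w
    have ht' : ψ ≫ t = w := ht
    refine ⟨v + t ≫ T.mor₁, ?_⟩
    show ψ ≫ (v + t ≫ T.mor₁) = f
    rw [Preadditive.comp_add, ← Category.assoc, ht', ← hw]
    abel

/-- If `X` has no nonzero maps into any shift of any member of `S`, the same holds for any
object of the triangulated closure of `S`. -/
lemma auxKill {X : D} {S : Set D}
    (hS : ∀ Y ∈ S, ∀ n : ℤ, ∀ f : X ⟶ Y⟦n⟧, f = 0)
    {Z : D} (hZ : triangulatedClosure S Z) :
    ∀ n : ℤ, ∀ f : X ⟶ Z⟦n⟧, f = 0 := by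
  induction hZ with
  | @mem Y hY => exact hS Y hY
  | @zero Y hY =>
    intro n f
    exact ((shiftFunctor D n).map_isZero hY).eq_of_tgt f 0
  | @iso Y Y' _ e ih =>
    intro n f
    have h0 : f ≫ (shiftFunctor D n).map e.inv = 0 := ih n _
    calc f = (f ≫ (shiftFunctor D n).map e.inv) ≫ (shiftFunctor D n).map e.hom := by
          rw [Category.assoc, ← Functor.map_comp]; simp
    _ = 0 := by rw [h0, zero_comp]
  | @shift Y k _ ih =>
    intro n f
    have h0 : f ≫ ((shiftFunctorAdd D k n).app Y).inv = 0 := ih (k + n) _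
    calc f = (f ≫ ((shiftFunctorAdd D k n).app Y).inv) ≫ ((shiftFunctorAdd D k n).app Y).hom := by
          simp
    _ = 0 := by rw [h0, zero_comp]
  | @ext T hT _ _ ih₁ ih₃ =>
    intro n f
    have hTn : (shiftFunctor (Triangle D) n).obj T ∈ distinguishedTriangles :=
      Triangle.shift_distinguished T hT n
    set T' := (shiftFunctor (Triangle D) n).obj T with hT'def
    have hf2 : f ≫ T'.mor₂ = 0 := by
      have : f ≫ T'.mor₂ = (0 : X ⟶ T.obj₃⟦n⟧) := ih₃ n (f ≫ T'.mor₂)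
      exact this
    obtain ⟨g, hg⟩ := Triangle.coyoneda_exact₂ T' hTn f hf2
    have hg0 : g = (0 : X ⟶ T.obj₁⟦n⟧) := ih₁ n g
    rw [hg, hg0]; exact zero_comp

lemma auxOneDimBij {𝕜 : Type*} [Field 𝕜] {M N : Type*} [AddCommGroup M] [Module 𝕜 M]
    [AddCommGroup N] [Module 𝕜 N] (L : M →ₗ[𝕜] N)
    (hM : Module.finrank 𝕜 M = 1) (hN : Module.finrank 𝕜 N = 1)
    (hL : L ≠ 0) : Function.Bijective L := by
  have : FiniteDimensional 𝕜 M := FiniteDimensional.of_finrank_pos (by omega)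
  have : FiniteDimensional 𝕜 N := FiniteDimensional.of_finrank_pos (by omega)
  have hinj : Function.Injective L := by
    rw [← LinearMap.ker_eq_bot]
    by_contra hker
    have h1 : 1 ≤ Module.finrank 𝕜 (LinearMap.ker L) := by
      rw [Nat.one_le_iff_ne_zero]
      intro h0
      exact hker (Submodule.finrank_eq_zero.mp h0)
    have h2 : Module.finrank 𝕜 (LinearMap.ker L) = Module.finrank 𝕜 M := by
      have := Submodule.finrank_le (LinearMap.ker L)
      omega
    have : LinearMap.ker L = ⊤ := Submodule.eq_top_of_finrank_eq h2
    exact hL (LinearMap.ker_eq_top.mp this)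
  exact ⟨hinj, (LinearMap.injective_iff_surjective_of_finrank_eq_finrank
    (hM.trans hN.symm)).mp hinj⟩

end Aux

/-- Let `𝕜` be a field, `D` a `𝕜`-linear triangulated category with an autoequivalence
`X ↦ X⟨1⟩` (encoded here by the family of objects `∇^j⟨m⟩ = nabla j m`, `j ∈ I`, `m ∈ ℤ`,
which generate `D` as a triangulated category), and `(I, ≤)` a partially ordered set.  Let
`i ∈ I` and let `Δ`, `X` be objects of `D` satisfying:
(a) `Hom_D(Δ, ∇^j⟨m⟩[n]) = 0` for all `j ∈ I`, `m, n ∈ ℤ` unless `(j, n, m) = (i, 0, 0)`,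
and `Hom_D(Δ, ∇^i)` is one-dimensional over `𝕜`;
(b) the same conditions hold with `Δ` replaced by `X`;
(c) there exists a nonzero morphism `φ : Δ → ∇^i` whose cone lies in `D_{<i}`, the smallest
strictly full triangulated subcategory containing the `∇^j⟨m⟩` with `j < i`.
Then `X` is isomorphic to `Δ`. -/
theorem standard_object_unique {𝕜 : Type*} [Field 𝕜]
    {D : Type*} [Category D] [Preadditive D] [CategoryTheory.Linear 𝕜 D] [HasZeroObject D]
    [HasShift D ℤ] [∀ n : ℤ, (shiftFunctor D n).Additive] [Pretriangulated D]
    {I : Type*} [PartialOrder I] (nabla : I → ℤ → D)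
    (hgen : ∀ Z : D, triangulatedClosure {Y | ∃ (j : I) (m : ℤ), Y = nabla j m} Z)
    (i : I) (Δ X : D)
    (hΔvanish : ∀ (j : I) (m n : ℤ), ¬(j = i ∧ n = 0 ∧ m = 0) →
      ∀ f : Δ ⟶ (nabla j m)⟦n⟧, f = 0)
    (hΔdim : Module.finrank 𝕜 (Δ ⟶ nabla i 0) = 1)
    (hXvanish : ∀ (j : I) (m n : ℤ), ¬(j = i ∧ n = 0 ∧ m = 0) →
      ∀ f : X ⟶ (nabla j m)⟦n⟧, f = 0)
    (hXdim : Module.finrank 𝕜 (X ⟶ nabla i 0) = 1)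
    (hcone : ∃ (φ : Δ ⟶ nabla i 0), φ ≠ 0 ∧
      ∃ (C : D) (g : nabla i 0 ⟶ C) (h : C ⟶ Δ⟦(1 : ℤ)⟧),
        Triangle.mk φ g h ∈ distinguishedTriangles ∧
        triangulatedClosure {Y | ∃ (j : I), j < i ∧ ∃ (m : ℤ), Y = nabla j m} C) :
    Nonempty (X ≅ Δ) := by
  classical
  obtain ⟨φ, hφ, C, gC, hC, hdist, hCcl⟩ := hcone
  -- X kills C and all its shifts
  have hXkillS : ∀ Y ∈ {Y | ∃ (j : I), j < i ∧ ∃ (m : ℤ), Y = nabla j m},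
      ∀ n : ℤ, ∀ f : X ⟶ Y⟦n⟧, f = 0 := by
    rintro Y ⟨j, hj, m, rfl⟩ n f
    exact hXvanish j m n (fun h => absurd (h.1 ▸ hj) (lt_irrefl i)) f
  have hXC : ∀ f : X ⟶ C, f = 0 := by
    intro f
    have h0 : f ≫ ((shiftFunctorZero D ℤ).app C).inv = 0 :=
      auxKill hXkillS hCcl 0 _
    calc f = (f ≫ ((shiftFunctorZero D ℤ).app C).inv) ≫ ((shiftFunctorZero D ℤ).app C).hom := by
          simp
    _ = 0 := by rw [h0, zero_comp]
  -- a nonzero map X ⟶ ∇ i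
  have : Nontrivial (X ⟶ nabla i 0) :=
    Module.nontrivial_of_finrank_pos (R := 𝕜) (by omega)
  obtain ⟨f₀, hf₀⟩ := exists_ne (0 : X ⟶ nabla i 0)
  -- lift it through φ
  obtain ⟨ψ, hψ⟩ := Triangle.coyoneda_exact₂ _ hdist f₀ (hXC _)
  have hψφ : ψ ≫ φ = f₀ := hψ.symm
  -- the bijectivity predicate
  have hP : ∀ Z : D, ∀ n : ℤ, Function.Bijective (fun g : Δ ⟶ Z⟦n⟧ => ψ ≫ g) := by
    intro Z
    induction hgen Z with
    | @mem Y hY =>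
      obtain ⟨j, m, rfl⟩ := hY
      intro n
      by_cases hc : j = i ∧ n = 0 ∧ m = 0
      · obtain ⟨rfl, rfl, rfl⟩ := hc
        apply auxCompBijOfIso ψ ((shiftFunctorZero D ℤ).app (nabla j 0)).symm
        have hL : (Linear.leftComp 𝕜 (nabla j 0) ψ) ≠ 0 := by
          intro h0
          apply hf₀
          rw [← hψφ]
          have : (Linear.leftComp 𝕜 (nabla j 0) ψ) φ = 0 := by rw [h0]; rfl
          exact this
        exact auxOneDimBij (Linear.leftComp 𝕜 (nabla j 0) ψ) hΔdim hXdim hL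
      · constructor
        · intro g₁ g₂ _
          rw [hΔvanish j m n hc g₁, hΔvanish j m n hc g₂]
        · intro f
          refine ⟨0, ?_⟩
          show ψ ≫ (0 : Δ ⟶ (nabla j m)⟦n⟧) = f
          rw [hXvanish j m n hc f]; exact comp_zero
    | @zero Y hY =>
      intro n
      have hz : IsZero (Y⟦n⟧) := (shiftFunctor D n).map_isZero hY
      constructor
      · intro g₁ g₂ _
        rw [hz.eq_of_tgt g₁ 0, hz.eq_of_tgt g₂ 0]
      · intro f
        refine ⟨0, ?_⟩
        show ψ ≫ (0 : Δ ⟶ Y⟦n⟧) = f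
        exact hz.eq_of_tgt _ f
    | @iso Y Y' _ e ih =>
      intro n
      exact auxCompBijOfIso ψ ((shiftFunctor D n).mapIso e) (ih n)
    | @shift Y k _ ih => exact auxBijShift ψ ih k
    | @ext T hT _ _ ih₁ ih₃ =>
      intro n
      have hTn : (shiftFunctor (Triangle D) n).obj T ∈ distinguishedTriangles :=
        Triangle.shift_distinguished T hT n
      exact auxChase ψ ((shiftFunctor (Triangle D) n).obj T) hTn (ih₁ n)
        (auxBijShift ψ ih₁ n 1) (ih₃ n) (auxBijShift ψ ih₃ n (-1))
  have hbij : ∀ Z : D, Function.Bijective (fun g : Δ ⟶ Z => ψ ≫ g) := fun Z =>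
    auxCompBijOfIso ψ ((shiftFunctorZero D ℤ).app Z) (hP Z 0)
  obtain ⟨ρ, hρ⟩ := (hbij X).2 (𝟙 X)
  have hρ' : ψ ≫ ρ = 𝟙 X := hρ
  have hρψ : ρ ≫ ψ = 𝟙 Δ := by
    apply (hbij Δ).1
    show ψ ≫ (ρ ≫ ψ) = ψ ≫ 𝟙 Δ
    erw [← Category.assoc, hρ']
    exact (Category.id_comp ψ).trans (Category.comp_id ψ).symm
  exact ⟨⟨ψ, ρ, hρ', hρψ⟩⟩
end

section
/- Let k be a commutative ring, A a commutative Noetherian k-algebra, G an injective A-module, and M a flat k-module. Then G ⊗_k M is an injective A-module. -/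
open scoped TensorProduct

namespace InjTensorFlat

variable (k A : Type*) [CommRing k] [CommRing A] [Algebra k A]
  (G M : Type*) [AddCommGroup G] [Module k G] [Module A G] [IsScalarTower k A G]
  [AddCommGroup M] [Module k M]

/-- `g ↦ g ⊗ₜ m` as an `A`-linear map. -/
noncomputable def tmulRight (m : M) : G →ₗ[A] G ⊗[k] M where
  toFun g := g ⊗ₜ m
  map_add' g g' := TensorProduct.add_tmul g g' m
  map_smul' a g := rfl

@[simp] lemma tmulRight_apply (m : M) (g : G) : tmulRight k A G M m g = g ⊗ₜ m := rfl

variable {k A G M} in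
/-- The natural map `Hom_A(N, G) ⊗_k M → Hom_A(N, G ⊗_k M)`. -/
noncomputable def phi (N : Type*) [AddCommGroup N] [Module A N] :
    ((N →ₗ[A] G) ⊗[k] M) →ₗ[k] (N →ₗ[A] G ⊗[k] M) :=
  TensorProduct.lift
  { toFun := fun f =>
    { toFun := fun m => (tmulRight k A G M m) ∘ₗ f
      map_add' := fun m m' => by
        ext x; simp [TensorProduct.tmul_add]
      map_smul' := fun c m => by
        ext x; simp [TensorProduct.tmul_smul] }
    map_add' := fun f f' => by
      ext m x; simp [TensorProduct.add_tmul]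
    map_smul' := fun c f => by
      ext m x
      simp [TensorProduct.smul_tmul'] }

variable {k A G M}

@[simp] lemma phi_tmul (N : Type*) [AddCommGroup N] [Module A N]
    (f : N →ₗ[A] G) (m : M) (x : N) :
    phi N (f ⊗ₜ[k] m) x = f x ⊗ₜ[k] m := rfl

/-- Precomposition with `u` as a `k`-linear map between `A`-linear hom modules. -/
noncomputable def precomp {N' N : Type*} [AddCommGroup N'] [Module A N']
    [AddCommGroup N] [Module A N] (u : N' →ₗ[A] N) :
    (N →ₗ[A] G) →ₗ[k] (N' →ₗ[A] G) where
  toFun f := f ∘ₗ u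
  map_add' f f' := LinearMap.add_comp _ _ _
  map_smul' c f := LinearMap.smul_comp c f u

@[simp] lemma precomp_apply {N' N : Type*} [AddCommGroup N'] [Module A N']
    [AddCommGroup N] [Module A N] (u : N' →ₗ[A] N) (f : N →ₗ[A] G) :
    (precomp (G := G) (k := k) u) f = f ∘ₗ u := rfl

lemma phi_natural {N' N : Type*} [AddCommGroup N'] [Module A N']
    [AddCommGroup N] [Module A N] (u : N' →ₗ[A] N)
    (x : (N →ₗ[A] G) ⊗[k] M) :
    (phi N x) ∘ₗ u
      = phi N' ((LinearMap.rTensor M (precomp (G := G) (k := k) u)) x) := by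
  induction x using TensorProduct.induction_on with
  | zero => simp
  | tmul f m => ext y; simp
  | add x y hx hy =>
      simp only [map_add, LinearMap.add_comp] at *
      rw [hx, hy]

section Free

/-- The composite equivalence `Hom_A(Aⁿ,G) ⊗ M ≃ (Fin n → G ⊗ M)`. -/
noncomputable def kappa (n : ℕ) : (((Fin n → A) →ₗ[A] G) ⊗[k] M) ≃ₗ[k] (Fin n → G ⊗[k] M) :=
  (TensorProduct.congr (LinearEquiv.piRing A G (Fin n) k) (LinearEquiv.refl k M)).trans
    ((TensorProduct.comm k (Fin n → G) M).trans
      ((TensorProduct.piRight k k M (fun _ : Fin n => G)).trans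
        (LinearEquiv.piCongrRight (fun _ : Fin n => TensorProduct.comm k M G))))

lemma piRing_phi (n : ℕ) (x : ((Fin n → A) →ₗ[A] G) ⊗[k] M) :
    LinearEquiv.piRing A (G ⊗[k] M) (Fin n) k (phi (Fin n → A) x)
      = kappa (k := k) (A := A) (G := G) (M := M) n x := by
  induction x using TensorProduct.induction_on with
  | zero => simp
  | tmul f m => funext i; simp [kappa]
  | add x y hx hy => rw [map_add, map_add, map_add, hx, hy]

lemma bijective_phi_free (n : ℕ) :
    Function.Bijective (phi (k := k) (A := A) (G := G) (M := M) (Fin n → A)) := by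
  have h : ⇑(phi (k := k) (A := A) (G := G) (M := M) (Fin n → A))
      = (⇑(LinearEquiv.piRing A (G ⊗[k] M) (Fin n) k).symm
          ∘ ⇑(kappa (k := k) (A := A) (G := G) (M := M) n)) := by
    funext x
    simp only [Function.comp_apply, ← piRing_phi, LinearEquiv.symm_apply_apply]
  rw [h]
  exact (LinearEquiv.bijective _).comp (LinearEquiv.bijective _)

end Free

section FG

variable [Module.Flat k M]

lemma injective_phi_of_surj {N : Type*} [AddCommGroup N] [Module A N]
    {n : ℕ} (π : (Fin n → A) →ₗ[A] N) (hπ : Function.Surjective π) :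
    Function.Injective (phi (k := k) (A := A) (G := G) (M := M) N) := by
  have hP : Function.Injective (precomp (G := G) (k := k) π) := by
    intro f g hfg
    exact LinearMap.ext fun y => by
      obtain ⟨x, rfl⟩ := hπ y
      exact LinearMap.congr_fun hfg x
  have hPT := Module.Flat.rTensor_preserves_injective_linearMap (M := M)
    (precomp (G := G) (k := k) π) hP
  intro x y hxy
  apply hPT
  apply (bijective_phi_free (k := k) (A := A) (G := G) (M := M) n).injective
  rw [← phi_natural, ← phi_natural, hxy]

lemma exact_precomp {N : Type*} [AddCommGroup N] [Module A N]
    {n : ℕ} (π : (Fin n → A) →ₗ[A] N) (hπ : Function.Surjective π) :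
    Function.Exact (precomp (G := G) (k := k) π)
      (precomp (G := G) (k := k) (LinearMap.ker π).subtype) := by
  intro f
  constructor
  · intro hf
    have hle : LinearMap.ker π ≤ LinearMap.ker f := fun y hy => by
      have := LinearMap.congr_fun hf ⟨y, hy⟩
      simpa using this
    refine ⟨(Submodule.liftQ (LinearMap.ker π) f hle) ∘ₗ
      (LinearMap.quotKerEquivOfSurjective π hπ).symm.toLinearMap, ?_⟩
    refine LinearMap.ext fun z => ?_
    have h1 : (LinearMap.quotKerEquivOfSurjective π hπ).symm (π z)
        = Submodule.Quotient.mk z := by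
      rw [LinearEquiv.symm_apply_eq]
      rfl
    simp [h1]
  · rintro ⟨g, rfl⟩
    ext y
    have : π ((LinearMap.ker π).subtype y) = 0 := y.2
    simp [this]

lemma surjective_phi_of_fp [IsNoetherianRing A] {N : Type*} [AddCommGroup N] [Module A N]
    {n : ℕ} (π : (Fin n → A) →ₗ[A] N) (hπ : Function.Surjective π) :
    Function.Surjective (phi (k := k) (A := A) (G := G) (M := M) N) := by
  intro h
  obtain ⟨x, hx⟩ := (bijective_phi_free (k := k) (A := A) (G := G) (M := M) n).surjective (h ∘ₗ π)
  set K := LinearMap.ker π with hK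
  haveI : Module.Finite A K := Module.Finite.iff_fg.mpr (IsNoetherian.noetherian K)
  obtain ⟨m, ρ, hρ⟩ := Module.Finite.exists_fin' A K
  have hxK : LinearMap.rTensor M (precomp (G := G) (k := k) K.subtype) x = 0 := by
    apply injective_phi_of_surj (k := k) (G := G) (M := M) ρ hρ
    rw [map_zero, ← phi_natural, hx]
    ext y
    have : π (K.subtype y) = 0 := y.2
    simp [this]
  have hex2 := Module.Flat.rTensor_exact (R := k) M
    (exact_precomp (k := k) (G := G) π hπ)
  obtain ⟨y, hy⟩ := (hex2 x).mp hxK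
  refine ⟨y, ?_⟩
  have hcomp : (phi (k := k) (A := A) (G := G) (M := M) N y) ∘ₗ π = h ∘ₗ π := by
    rw [phi_natural, hy, hx]
  exact LinearMap.ext fun z => by
    obtain ⟨w, rfl⟩ := hπ z
    exact LinearMap.congr_fun hcomp w

end FG

universe v

section Smallness

variable {A : Type*} [CommRing A]

/-- If the codomain and kernel of a linear map are `v`-small, so is the domain. -/
lemma small_aux {V W : Type*} [AddCommGroup V] [AddCommGroup W]
    [Module A V] [Module A W] (φ : V →ₗ[A] W)
    [Small.{v} W] [Small.{v} (LinearMap.ker φ)] : Small.{v} V := by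
  classical
  let σ : W → V := fun w => if h : ∃ v, φ v = w then h.choose else 0
  have hσ : ∀ v : V, φ (σ (φ v)) = φ v := fun v => by
    have h : ∃ v', φ v' = φ v := ⟨v, rfl⟩
    simp only [σ, dif_pos h]
    exact h.choose_spec
  have hinj : Function.Injective
      (fun v : V => ((φ v, ⟨v - σ (φ v), by simp [LinearMap.mem_ker, hσ]⟩) :
        W × LinearMap.ker φ)) := by
    intro v v' h
    have h1 : φ v = φ v' := congrArg Prod.fst h
    have h2 : v - σ (φ v) = v' - σ (φ v') :=
      congrArg (fun p : W × LinearMap.ker φ => (p.2 : V)) h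
    rw [h1] at h2
    have := congrArg (· + σ (φ v')) h2
    simpa using this
  exact small_of_injective hinj

variable (A) in
/-- `A / Ann(G)` is as small as `G`. -/
lemma small_quot_annihilator (G : Type v) [AddCommGroup G] [Module A G] :
    Small.{v} (A ⧸ Module.annihilator A G) := by
  let L : A →ₗ[A] (G → G) :=
    { toFun := fun a g => a • g
      map_add' := fun a b => by funext g; exact add_smul a b g
      map_smul' := fun a b => by funext g; exact mul_smul a b g }
  have hle : Module.annihilator A G ≤ LinearMap.ker L := by
    intro a ha
    simp only [LinearMap.mem_ker]
    funext g
    exact Module.mem_annihilator.mp ha g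
  have hinj : Function.Injective ((Module.annihilator A G).liftQ L hle) := by
    rw [← LinearMap.ker_eq_bot]
    apply Submodule.ker_liftQ_eq_bot
    intro a ha
    rw [LinearMap.mem_ker] at ha
    exact Module.mem_annihilator.mpr fun g => congrFun ha g
  exact small_of_injective hinj

variable (A) in
/-- Over a Noetherian ring, all quotients by powers of the annihilator are small. -/
lemma small_quot_pow_annihilator [IsNoetherianRing A]
    (G : Type v) [AddCommGroup G] [Module A G] :
    ∀ s : ℕ, Small.{v} (A ⧸ (Module.annihilator A G ^ s : Ideal A)) := by
  classical
  set B : Ideal A := Module.annihilator A G with hB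
  intro s
  induction s with
  | zero =>
      have : ∀ y : A ⧸ (B ^ 0 : Ideal A), y = 0 := by
        intro y
        obtain ⟨a, rfl⟩ := Submodule.Quotient.mk_surjective _ y
        rw [Submodule.Quotient.mk_eq_zero]
        simp [B]
      exact small_of_surjective (f := fun _ : PUnit => (0 : A ⧸ (B ^ 0 : Ideal A)))
        fun y => ⟨PUnit.unit, (this y).symm⟩
  | succ s ih =>
      have hle : (B ^ (s + 1) : Ideal A) ≤ B ^ s := Ideal.pow_le_pow_right (by omega)
      let φ : (A ⧸ (B ^ (s+1) : Ideal A)) →ₗ[A] (A ⧸ (B ^ s : Ideal A)) :=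
        Submodule.mapQ _ _ LinearMap.id (by simpa using hle)
      have hφ : ∀ z : A, φ (Submodule.Quotient.mk z) = Submodule.Quotient.mk z := by
        intro z
        rw [Submodule.mapQ_apply]
        rfl
      haveI : Small.{v} (A ⧸ (B ^ s : Ideal A)) := ih
      haveI : Small.{v} (LinearMap.ker φ) := by
        obtain ⟨r, b, hb⟩ := Submodule.fg_iff_exists_fin_generating_family.mp
          (IsNoetherian.noetherian (B ^ s : Ideal A))
        haveI : Small.{v} (A ⧸ B) := small_quot_annihilator A G
        let rep : (A ⧸ B) → A := Function.surjInv (Submodule.Quotient.mk_surjective B)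
        have hrep : ∀ z : A ⧸ B, (Submodule.Quotient.mk (rep z) : A ⧸ B) = z :=
          fun z => Function.surjInv_eq (Submodule.Quotient.mk_surjective B) z
        have hbmem : ∀ i, b i ∈ (B ^ s : Ideal A) := by
          intro i
          rw [← hb]
          exact Submodule.subset_span ⟨i, rfl⟩
        have hmemker : ∀ y : Fin r → (A ⧸ B),
            (Submodule.Quotient.mk (∑ i, rep (y i) * b i) :
              A ⧸ (B ^ (s+1) : Ideal A)) ∈ LinearMap.ker φ := by
          intro y
          rw [LinearMap.mem_ker, hφ, Submodule.Quotient.mk_eq_zero]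
          exact Ideal.sum_mem _ fun i _ => Ideal.mul_mem_left _ _ (hbmem i)
        let F : (Fin r → (A ⧸ B)) → LinearMap.ker φ := fun y =>
          ⟨Submodule.Quotient.mk (∑ i, rep (y i) * b i), hmemker y⟩
        have hFsurj : Function.Surjective F := by
          rintro ⟨t, ht⟩
          obtain ⟨a, rfl⟩ := Submodule.Quotient.mk_surjective _ t
          rw [LinearMap.mem_ker, hφ, Submodule.Quotient.mk_eq_zero] at ht
          rw [← hb] at ht
          obtain ⟨c, hc⟩ := (Submodule.mem_span_range_iff_exists_fun A).mp ht
          refine ⟨fun i => Submodule.Quotient.mk (c i), ?_⟩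
          apply Subtype.ext
          show (Submodule.Quotient.mk _ : A ⧸ (B ^ (s+1) : Ideal A)) = _
          rw [Submodule.Quotient.eq]
          have : (∑ i, rep (Submodule.Quotient.mk (c i)) * b i) - a
              = ∑ i, (rep (Submodule.Quotient.mk (c i)) - c i) * b i := by
            rw [← hc]
            rw [← Finset.sum_sub_distrib]
            congr 1
            funext i
            rw [smul_eq_mul]
            ring
          rw [this]
          refine Ideal.sum_mem _ fun i _ => ?_
          have hβ : rep (Submodule.Quotient.mk (c i)) - c i ∈ B := by
            rw [← Submodule.Quotient.eq]
            exact hrep _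
          have := Ideal.mul_mem_mul hβ (hbmem i)
          rwa [← pow_succ'] at this
        exact small_of_surjective hFsurj
      exact small_aux φ

end Smallness

section BaerOfSmall

variable {A : Type*} [CommRing A] [IsNoetherianRing A]
variable {G : Type v} [AddCommGroup G] [Module A G]

theorem baer_of_small_injective (hG : Module.Injective A G) : Module.Baer A G := by
  classical
  intro I f
  set B : Ideal A := Module.annihilator A G with hB
  obtain ⟨k₀, hk₀⟩ := Ideal.exists_pow_inf_eq_pow_smul B (I : Submodule A A)
  set s := k₀ + 1 with hs
  have hAR : (B ^ s • ⊤ : Submodule A A) ⊓ (I : Submodule A A)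
      = B • ((B ^ k₀ • ⊤ : Submodule A A) ⊓ (I : Submodule A A)) := by
    have h1 := hk₀ s (by omega)
    rwa [show s - k₀ = 1 from by omega, pow_one] at h1
  have hsub : (B ^ s • ⊤ : Submodule A A) ⊓ (I : Submodule A A)
      ≤ B • (I : Submodule A A) := by
    rw [hAR]
    exact Submodule.smul_mono le_rfl inf_le_right
  have hvanish : ∀ x ∈ (B • (I : Submodule A A)),
      x ∈ I ∧ ∀ (hxI : x ∈ I), f ⟨x, hxI⟩ = 0 := by
    intro x hx
    refine Submodule.smul_induction_on hx ?_ ?_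
    · intro r hr m hm
      have hmem : r • m ∈ I := I.smul_mem r hm
      refine ⟨hmem, fun h' => ?_⟩
      have he : (⟨r • m, h'⟩ : I) = r • (⟨m, hm⟩ : I) := rfl
      rw [he, map_smul]
      exact Module.mem_annihilator.mp hr _
    · rintro x y ⟨hxI, hfx⟩ ⟨hyI, hfy⟩
      refine ⟨I.add_mem hxI hyI, fun h' => ?_⟩
      have he : (⟨x + y, h'⟩ : I) = ⟨x, hxI⟩ + ⟨y, hyI⟩ := rfl
      rw [he, map_add, hfx hxI, hfy hyI, add_zero]
  set J : Ideal A := I ⊔ (B ^ s) with hJ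
  let ρ : (↥I × ↥(B ^ s : Ideal A)) →ₗ[A] (A × G) :=
    ((I.subtype ∘ₗ LinearMap.fst A (↥I) (↥(B ^ s : Ideal A)))
        + ((B ^ s : Ideal A).subtype ∘ₗ LinearMap.snd A (↥I) (↥(B ^ s : Ideal A)))).prod
      (- (f ∘ₗ LinearMap.fst A (↥I) (↥(B ^ s : Ideal A))))
  have hρ : ∀ q : ↥I × ↥(B ^ s : Ideal A),
      ρ q = ((q.1 : A) + (q.2 : A), - f q.1) := fun q => rfl
  set L : Submodule A (A × G) := LinearMap.range ρ with hL
  set mkY : (A × G) →ₗ[A] ((A × G) ⧸ L) := L.mkQ with hmkY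
  set ι : G →ₗ[A] ((A × G) ⧸ L) := mkY ∘ₗ LinearMap.inr A A G with hidef
  have hιinj : Function.Injective ι := by
    rw [injective_iff_map_eq_zero]
    intro g hg
    have hmem : ((0 : A), g) ∈ L := by
      rw [← Submodule.Quotient.mk_eq_zero L]
      exact hg
    obtain ⟨⟨x, b⟩, hxb⟩ := hmem
    have h1 : (x : A) + (b : A) = 0 := congrArg Prod.fst hxb
    have h2 : - f x = g := congrArg Prod.snd hxb
    have hxBs : (x : A) ∈ (B ^ s : Ideal A) := by
      rw [eq_neg_of_add_eq_zero_left h1]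
      exact neg_mem b.2
    have hxBI : (x : A) ∈ B • (I : Submodule A A) := by
      apply hsub
      refine Submodule.mem_inf.mpr ⟨?_, x.2⟩
      rw [Ideal.smul_eq_mul, Ideal.mul_top]
      exact hxBs
    have hz := (hvanish _ hxBI).2 x.2
    rw [show (⟨(x : A), x.2⟩ : I) = x from Subtype.ext rfl] at hz
    rw [← h2, hz, neg_zero]
  let p1 : (A × G) →ₗ[A] (A ⧸ J) := J.mkQ ∘ₗ LinearMap.fst A A G
  have hkerL : L ≤ LinearMap.ker p1 := by
    rintro z ⟨⟨x, b⟩, rfl⟩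
    rw [LinearMap.mem_ker]
    show J.mkQ ((x : A) + (b : A)) = 0
    rw [Submodule.mkQ_apply, Submodule.Quotient.mk_eq_zero]
    exact J.add_mem (Submodule.mem_sup_left x.2) (Submodule.mem_sup_right b.2)
  let p : ((A × G) ⧸ L) →ₗ[A] (A ⧸ J) := Submodule.liftQ L p1 hkerL
  have hp : ∀ z : A × G, p (Submodule.Quotient.mk z) = J.mkQ z.1 := fun z =>
    Submodule.liftQ_apply L p1 z
  have hrangeι : LinearMap.ker p = LinearMap.range ι := by
    apply le_antisymm
    · rintro y hy
      obtain ⟨⟨a, g⟩, rfl⟩ := Submodule.Quotient.mk_surjective L y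
      rw [LinearMap.mem_ker, hp] at hy
      have haJ : a ∈ J := by
        rwa [Submodule.mkQ_apply, Submodule.Quotient.mk_eq_zero] at hy
      obtain ⟨x, hxI, b, hbB, hxba⟩ := Submodule.mem_sup.mp haJ
      refine ⟨g + f ⟨x, hxI⟩, ?_⟩
      show mkY ((0 : A), g + f ⟨x, hxI⟩) = _
      rw [hmkY, Submodule.mkQ_apply, Submodule.Quotient.eq]
      refine ⟨(-(⟨x, hxI⟩, ⟨b, hbB⟩) : ↥I × ↥(B ^ s : Ideal A)), ?_⟩
      rw [map_neg, hρ]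
      have hfst : ((⟨x, hxI⟩ : I) : A) + ((⟨b, hbB⟩ : ↥(B ^ s : Ideal A)) : A) = a := hxba
      rw [show (((⟨x, hxI⟩ : I) : A) + ((⟨b, hbB⟩ : ↥(B ^ s : Ideal A)) : A),
            - f ⟨x, hxI⟩) = (a, - f ⟨x, hxI⟩) from by rw [hfst]]
      rw [Prod.neg_mk, neg_neg]
      show ((-a : A), f ⟨x, hxI⟩) = ((0 : A), g + f ⟨x, hxI⟩) - (a, g)
      ext
      · simp
      · show f ⟨x, hxI⟩ = g + f ⟨x, hxI⟩ - g
        abel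
    · rintro _ ⟨g, rfl⟩
      rw [LinearMap.mem_ker]
      show p (Submodule.Quotient.mk ((0 : A), g)) = 0
      rw [hp]
      simp
  haveI : Small.{v} (A ⧸ J) := by
    haveI := small_quot_pow_annihilator A G s
    have hle2 : (B ^ s : Ideal A) ≤ J := le_sup_right
    let ψ : (A ⧸ (B ^ s : Ideal A)) →ₗ[A] (A ⧸ J) :=
      Submodule.mapQ _ _ LinearMap.id (by simpa using hle2)
    refine small_of_surjective (f := ψ) ?_
    intro y
    obtain ⟨a, rfl⟩ := Submodule.Quotient.mk_surjective _ y
    exact ⟨Submodule.Quotient.mk a, by rw [Submodule.mapQ_apply]; rfl⟩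
  haveI : Small.{v} (LinearMap.ker p) := by
    rw [hrangeι]
    refine small_of_surjective
      (f := fun g : G => (⟨ι g, LinearMap.mem_range_self ι g⟩ : LinearMap.range ι)) ?_
    rintro ⟨_, g, rfl⟩
    exact ⟨g, rfl⟩
  haveI : Small.{v} ((A × G) ⧸ L) := small_aux p
  let e : Shrink.{v} ((A × G) ⧸ L) ≃ₗ[A] ((A × G) ⧸ L) := Shrink.linearEquiv A _
  obtain ⟨h, hh⟩ := hG.out (e.symm.toLinearMap ∘ₗ ι)
    (e.symm.injective.comp hιinj) LinearMap.id
  refine ⟨(h ∘ₗ e.symm.toLinearMap) ∘ₗ (mkY ∘ₗ LinearMap.inl A A G), fun x hx => ?_⟩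
  have hkey : mkY (x, (0 : G)) = ι (f ⟨x, hx⟩) := by
    show mkY (x, (0 : G)) = mkY ((0 : A), f ⟨x, hx⟩)
    rw [hmkY, Submodule.mkQ_apply, Submodule.mkQ_apply, Submodule.Quotient.eq]
    refine ⟨((⟨x, hx⟩ : I), (0 : ↥(B ^ s : Ideal A))), ?_⟩
    rw [hρ]
    show ((x + 0 : A), - f ⟨x, hx⟩) = (x, (0 : G)) - ((0 : A), f ⟨x, hx⟩)
    ext
    · simp
    · show - f ⟨x, hx⟩ = (0 : G) - f ⟨x, hx⟩
      abel
  show h (e.symm (mkY (x, (0 : G)))) = f ⟨x, hx⟩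
  rw [hkey]
  exact hh (f ⟨x, hx⟩)

end BaerOfSmall

end InjTensorFlat


/-- Let `k` be a commutative ring, `A` a commutative Noetherian `k`-algebra, `G` an injective
`A`-module, and `M` a flat `k`-module.  Then `G ⊗_k M` is an injective `A`-module. -/
theorem injective_tensor_flat (k A : Type*) [CommRing k] [CommRing A] [Algebra k A]
    [IsNoetherianRing A]
    (G M : Type*) [AddCommGroup G] [Module k G] [Module A G] [IsScalarTower k A G]
    [AddCommGroup M] [Module k M] [Module.Flat k M]
    (hG : Module.Injective A G) : Module.Injective A (G ⊗[k] M) := by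
  apply Module.Baer.injective
  intro I g
  haveI : Module.Finite A ↥I := Module.Finite.iff_fg.mpr (IsNoetherian.noetherian I)
  obtain ⟨n, π, hπ⟩ := Module.Finite.exists_fin' A ↥I
  obtain ⟨x, hx⟩ := InjTensorFlat.surjective_phi_of_fp (k := k) (G := G) (M := M) π hπ g
  have hBaer : Module.Baer A G := InjTensorFlat.baer_of_small_injective hG
  have hS : Function.Surjective (InjTensorFlat.precomp (G := G) (k := k) (I.subtype)) := by
    intro f0
    obtain ⟨f', hf'⟩ := hBaer I f0
    refine ⟨f', LinearMap.ext fun y => ?_⟩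
    have := hf' y.1 y.2
    simpa using this
  obtain ⟨y, hy⟩ := LinearMap.rTensor_surjective M hS x
  refine ⟨InjTensorFlat.phi A y, fun a ha => ?_⟩
  have hcomp : (InjTensorFlat.phi A y) ∘ₗ I.subtype = g := by
    rw [InjTensorFlat.phi_natural, hy, hx]
  exact LinearMap.congr_fun hcomp ⟨a, ha⟩
end
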